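/- arXiv:1805.10509 — 2 statements merged into one kernel-verified Lean document; each statement's English description precedes it below -/
import Mathlib

section
/- The Niemytzki plane is not normal, but it is an rc-space; hence the Niemytzki plane gives an example of an rc-space that is not normal. -/
open Set Metric

/-- Basic Niemytzki neighbourhood: for a point on the axis, the point together with the
open disc tangent to the axis at that point; for a point above the axis, the open disc
intersected with the closed half-plane. -/
noncomputable def NK (p : ℝ × ℝ) (α : ℝ) : Set (ℝ × ℝ) :=
  if p.2 = 0 then insert p (Metric.ball (p.1, α) α)
  else Metric.ball p α ∩ {q : ℝ × ℝ | 0 ≤ q.2}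

/-- The underlying set of the Niemytzki plane: the closed upper half-plane. -/
abbrev NPoint : Type := {p : ℝ × ℝ // 0 ≤ p.2}

/-- The Niemytzki (tangent disc) topology on the closed upper half-plane. -/
noncomputable def niem : TopologicalSpace NPoint :=
  TopologicalSpace.generateFrom
    {s : Set NPoint | ∃ (q : NPoint) (α : ℝ), 0 < α ∧ s = Subtype.val ⁻¹' NK q.val α}

noncomputable instance : TopologicalSpace NPoint := niem

namespace NiemAux

/-- The point on the axis with first coordinate `x`. -/
def axpt (x : ℝ) : NPoint := ⟨(x, 0), le_refl 0⟩

@[simp] lemma axpt_val (x : ℝ) : (axpt x).val = (x, 0) := rfl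

lemma val_axis {p : NPoint} (h : p.val.2 = 0) : p.val = (p.val.1, 0) :=
  Prod.ext_iff.2 ⟨rfl, h⟩

/-- Membership in the open square tangent to the axis at `x` of "radius" α. -/
def inSq (x α : ℝ) (q : NPoint) : Prop :=
  |q.val.1 - x| < α ∧ 0 < q.val.2 ∧ q.val.2 < 2*α

lemma NK_axis (x α : ℝ) : NK (x, 0) α = insert (x,0) (Metric.ball (x, α) α) := by
  simp [NK]

lemma NK_pos {p : ℝ×ℝ} (h : p.2 ≠ 0) (α : ℝ) :
    NK p α = Metric.ball p α ∩ {q : ℝ×ℝ | 0 ≤ q.2} := by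
  simp [NK, h]

lemma mem_NK_axis {x α : ℝ} {q : NPoint} :
    q.val ∈ NK (x, 0) α ↔ q = axpt x ∨ inSq x α q := by
  rw [NK_axis]
  simp only [Set.mem_insert_iff, Metric.mem_ball, Prod.dist_eq, Real.dist_eq, sup_lt_iff]
  constructor
  · rintro (h | ⟨a1, a2⟩)
    · exact Or.inl (Subtype.ext h)
    · right
      rw [abs_sub_lt_iff] at a2
      exact ⟨a1, by linarith [a2.1, a2.2], by linarith [a2.1, a2.2]⟩
  · rintro (rfl | ⟨h1, h2, h3⟩)
    · exact Or.inl rfl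
    · exact Or.inr ⟨h1, abs_sub_lt_iff.2 ⟨by linarith, by linarith⟩⟩

lemma mem_NK_pos {p : ℝ×ℝ} (h : p.2 ≠ 0) {α : ℝ} {q : NPoint} :
    q.val ∈ NK p α ↔ dist q.val p < α := by
  rw [NK_pos h]
  exact ⟨fun hh => hh.1, fun hh => ⟨hh, q.2⟩⟩

lemma mem_NK_self {p : NPoint} {α : ℝ} (hα : 0 < α) : p.val ∈ NK p.val α := by
  by_cases h : p.val.2 = 0
  · simp [NK, h]
  · rw [mem_NK_pos h]
    simpa [dist_self] using hα

lemma inSq_mem_NK {x α : ℝ} {q : NPoint} (h : inSq x α q) : q.val ∈ NK (x,0) α :=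
  mem_NK_axis.2 (Or.inr h)

lemma fst_abs_le (u v : ℝ×ℝ) : |u.1 - v.1| ≤ dist u v := by
  rw [Prod.dist_eq, Real.dist_eq, Real.dist_eq]; exact le_sup_left

lemma snd_abs_le (u v : ℝ×ℝ) : |u.2 - v.2| ≤ dist u v := by
  rw [Prod.dist_eq, Real.dist_eq, Real.dist_eq]; exact le_sup_right

lemma shrink (q : NPoint) {α : ℝ} (hα : 0 < α) (p : NPoint) (hp : p.val ∈ NK q.val α) :
    ∃ β, 0 < β ∧ ∀ r : NPoint, r.val ∈ NK p.val β → r.val ∈ NK q.val α := by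
  by_cases hq2 : q.val.2 = 0
  · rw [val_axis hq2] at hp ⊢
    rcases mem_NK_axis.1 hp with heq | ⟨h1, h2, h3⟩
    · refine ⟨α, hα, fun r hr => ?_⟩
      rwa [heq, axpt_val] at hr
    · refine ⟨min (α - |p.val.1 - q.val.1|) (min (p.val.2/2) (2*α - p.val.2)), ?_, fun r hr => ?_⟩
      · simp only [lt_min_iff]
        exact ⟨by linarith, by linarith, by linarith⟩
      · rw [mem_NK_pos (ne_of_gt h2)] at hr
        apply mem_NK_axis.2
        right
        have e1 : |r.val.1 - p.val.1| ≤ dist r.val p.val := fst_abs_le _ _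
        have e2 : |r.val.2 - p.val.2| ≤ dist r.val p.val := snd_abs_le _ _
        have hm1 : dist r.val p.val < α - |p.val.1 - q.val.1| :=
          lt_of_lt_of_le hr (min_le_left _ _)
        have hm2 : dist r.val p.val < p.val.2/2 :=
          lt_of_lt_of_le hr (le_trans (min_le_right _ _) (min_le_left _ _))
        have hm3 : dist r.val p.val < 2*α - p.val.2 :=
          lt_of_lt_of_le hr (le_trans (min_le_right _ _) (min_le_right _ _))
        have t1 : |r.val.1 - q.val.1| ≤ |r.val.1 - p.val.1| + |p.val.1 - q.val.1| :=
          abs_sub_le _ _ _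
        have a1 : r.val.2 - p.val.2 ≤ |r.val.2 - p.val.2| := le_abs_self _
        have a2 : p.val.2 - r.val.2 ≤ |r.val.2 - p.val.2| := by
          rw [abs_sub_comm]; exact le_abs_self _
        exact ⟨by linarith, by linarith, by linarith⟩
  · rw [mem_NK_pos hq2] at hp
    have hd0 : (0:ℝ) ≤ dist p.val q.val := dist_nonneg
    refine ⟨(α - dist p.val q.val)/2, by linarith, fun r hr => ?_⟩
    have key : dist r.val p.val < α - dist p.val q.val := by
      by_cases hp2 : p.val.2 = 0
      · have hr' : r.val ∈ NK (p.val.1, 0) ((α - dist p.val q.val)/2) := by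
          rw [← val_axis hp2]; exact hr
        rcases mem_NK_axis.1 hr' with heq | ⟨h1, h2, h3⟩
        · have : r.val = p.val := by rw [heq, axpt_val, ← val_axis hp2]
          rw [this]
          simpa [dist_self] using (by linarith : (0:ℝ) < α - dist p.val q.val)
        · have hlt : dist r.val (p.val.1, 0) < α - dist p.val q.val := by
            rw [Prod.dist_eq]
            apply max_lt
            · rw [Real.dist_eq]; linarith
            · rw [Real.dist_eq, sub_zero, abs_of_pos h2]; linarith
          rwa [← val_axis hp2] at hlt
      · rw [mem_NK_pos hp2] at hr
        linarith
    rw [mem_NK_pos hq2]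
    calc dist r.val q.val ≤ dist r.val p.val + dist p.val q.val := dist_triangle _ _ _
      _ < α := by linarith

lemma isOpen_NK (q : NPoint) {α : ℝ} (hα : 0 < α) :
    IsOpen (Subtype.val ⁻¹' NK q.val α : Set NPoint) := by
  show TopologicalSpace.GenerateOpen
      {s : Set NPoint | ∃ (q : NPoint) (α : ℝ), 0 < α ∧ s = Subtype.val ⁻¹' NK q.val α}
      (Subtype.val ⁻¹' NK q.val α)
  exact TopologicalSpace.GenerateOpen.basic _ ⟨q, α, hα, rfl⟩

lemma isOpen_of_basic {U : Set NPoint}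
    (h : ∀ p ∈ U, ∃ α, 0 < α ∧ Subtype.val ⁻¹' NK p.val α ⊆ U) : IsOpen U := by
  have hU : U = ⋃₀ {s | (∃ (q : NPoint) (α : ℝ), 0 < α ∧ s = Subtype.val ⁻¹' NK q.val α) ∧ s ⊆ U} := by
    apply Subset.antisymm
    · intro p hp
      obtain ⟨α, hα, hsub⟩ := h p hp
      exact ⟨_, ⟨⟨p, α, hα, rfl⟩, hsub⟩, mem_NK_self hα⟩
    · rintro p ⟨s, ⟨_, hsub⟩, hps⟩
      exact hsub hps
  rw [hU]
  apply isOpen_sUnion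
  rintro s ⟨⟨q, α, hα, rfl⟩, -⟩
  exact isOpen_NK q hα

lemma NK_mono {p : NPoint} {α β : ℝ} (h : α ≤ β) :
    (Subtype.val ⁻¹' NK p.val α : Set NPoint) ⊆ Subtype.val ⁻¹' NK p.val β := by
  intro r hr
  by_cases h2 : p.val.2 = 0
  · rw [Set.mem_preimage, val_axis h2] at hr ⊢
    rcases mem_NK_axis.1 hr with heq | hsq
    · exact mem_NK_axis.2 (Or.inl heq)
    · exact mem_NK_axis.2 (Or.inr ⟨hsq.1.trans_le h, hsq.2.1, hsq.2.2.trans_le (by linarith)⟩)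
  · rw [Set.mem_preimage, mem_NK_pos h2] at hr ⊢
    exact hr.trans_le h

lemma basic_sub {U : Set NPoint} (hU : IsOpen U) :
    ∀ p ∈ U, ∃ α, 0 < α ∧ Subtype.val ⁻¹' NK p.val α ⊆ U := by
  have hU' : TopologicalSpace.GenerateOpen
      {s : Set NPoint | ∃ (q : NPoint) (α : ℝ), 0 < α ∧ s = Subtype.val ⁻¹' NK q.val α} U := hU
  clear hU
  induction hU' with
  | basic s hs =>
    obtain ⟨q, α, hα, rfl⟩ := hs
    intro p hp
    obtain ⟨β, hβ, himp⟩ := shrink q hα p hp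
    exact ⟨β, hβ, fun r hr => himp r hr⟩
  | univ => exact fun p _ => ⟨1, one_pos, subset_univ _⟩
  | inter s t hs ht ihs iht =>
    intro p hp
    obtain ⟨α, hα, hsub⟩ := ihs p hp.1
    obtain ⟨β, hβ, hsub'⟩ := iht p hp.2
    exact ⟨min α β, lt_min hα hβ, fun r hr =>
      ⟨hsub (NK_mono (min_le_left α β) hr), hsub' (NK_mono (min_le_right α β) hr)⟩⟩
  | sUnion S hS ih =>
    rintro p ⟨s, hsS, hps⟩
    obtain ⟨α, hα, hsub⟩ := ih s hsS p hps
    exact ⟨α, hα, fun r hr => ⟨s, hsS, hsub hr⟩⟩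

lemma axis_closed (S : Set ℝ) : IsClosed {p : NPoint | p.val.2 = 0 ∧ p.val.1 ∈ S} := by
  rw [← isOpen_compl_iff]
  apply isOpen_of_basic
  intro p hp
  by_cases h2 : p.val.2 = 0
  · refine ⟨1, one_pos, fun r hr => ?_⟩
    rw [Set.mem_preimage, val_axis h2] at hr
    rcases mem_NK_axis.1 hr with heq | hsq
    · have hrp : r = p := Subtype.ext (by rw [heq, axpt_val, ← val_axis h2])
      rwa [hrp]
    · simp only [Set.mem_compl_iff, Set.mem_setOf_eq, not_and]
      intro hr2
      exact absurd hr2 (ne_of_gt hsq.2.1)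
  · have h2' : 0 < p.val.2 := lt_of_le_of_ne p.2 (Ne.symm h2)
    refine ⟨p.val.2, h2', fun r hr => ?_⟩
    rw [Set.mem_preimage, mem_NK_pos h2] at hr
    simp only [Set.mem_compl_iff, Set.mem_setOf_eq, not_and]
    intro hr2
    exfalso
    have hle := snd_abs_le r.val p.val
    rw [hr2, zero_sub, abs_neg, abs_of_pos h2'] at hle
    linarith

lemma exists_inSq_interior {G : Set NPoint} (hG : G = closure (interior G)) {b : ℝ}
    (hb : axpt b ∈ G) {β : ℝ} (hβ : 0 < β) :
    ∃ p : NPoint, inSq b β p ∧ p ∈ interior G := by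
  have hb' : axpt b ∈ closure (interior G) := by rw [← hG]; exact hb
  have hmem : axpt b ∈ (Subtype.val ⁻¹' NK (axpt b).val β : Set NPoint) :=
    mem_NK_self hβ
  obtain ⟨z, hzO, hzI⟩ := _root_.mem_closure_iff.1 hb' _ (isOpen_NK (axpt b) hβ) hmem
  have hzO' : z.val ∈ NK ((b:ℝ), 0) β := hzO
  rcases mem_NK_axis.1 hzO' with heq | hsq
  · have hI : axpt b ∈ interior G := heq ▸ hzI
    obtain ⟨γ, hγ, hsub⟩ := basic_sub isOpen_interior (axpt b) hI
    have ht : 0 < min β γ := lt_min hβ hγ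
    refine ⟨⟨(b, min β γ), le_of_lt ht⟩, ⟨by simpa using hβ, ht, ?_⟩, ?_⟩
    · calc min β γ ≤ β := min_le_left _ _
        _ < 2*β := by linarith
    · apply hsub
      show (⟨(b, min β γ), le_of_lt ht⟩ : NPoint).val ∈ NK ((b:ℝ), 0) γ
      exact inSq_mem_NK ⟨by simpa using hγ, ht,
        lt_of_le_of_lt (min_le_right _ _) (by linarith)⟩
  · exact ⟨z, hsq, hzI⟩

lemma dist_lower {G : Set NPoint} (hG : G = closure (interior G)) {x α : ℝ}
    (hM : ∀ q : NPoint, inSq x α q → q ∉ G) {b : ℝ} (hb : axpt b ∈ G) : α ≤ |b - x| := by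
  by_contra hcon
  push_neg at hcon
  have habs : 0 ≤ |b - x| := abs_nonneg _
  obtain ⟨p, ⟨hp1, hp2, hp3⟩, hpI⟩ :=
    exists_inSq_interior hG hb (β := (α - |b - x|)/2) (by linarith)
  apply hM p ?_ (interior_subset hpI)
  refine ⟨?_, hp2, ?_⟩
  · have htri : |p.val.1 - x| ≤ |p.val.1 - b| + |b - x| := abs_sub_le _ _ _
    linarith
  · linarith

/-- The axis part of the separating open set. -/
def sepAx (F G : Set NPoint) : Set NPoint :=
  {w : NPoint | ∃ x α : ℝ, 0 < α ∧ axpt x ∈ F ∧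
    (∀ q : NPoint, inSq x α q → q ∉ G) ∧ w.val ∈ NK (x, 0) (α/4)}

/-- The interior part of the separating open set. -/
def sepP (F G : Set NPoint) : Set NPoint :=
  {w : NPoint | ∃ (p : NPoint) (r : ℝ), 0 < r ∧ p ∈ F ∧ 0 < p.val.2 ∧
    (∀ q : NPoint, dist q.val p.val < r → q ∉ G) ∧ dist w.val p.val < r/2}

def sep (F G : Set NPoint) : Set NPoint := sepAx F G ∪ sepP F G

lemma isOpen_sepAx (F G : Set NPoint) : IsOpen (sepAx F G) := by
  apply isOpen_of_basic
  rintro w ⟨x, α, hα, hF, hM, hw⟩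
  obtain ⟨β, hβ, himp⟩ := shrink (axpt x) (by linarith : (0:ℝ) < α/4) w hw
  exact ⟨β, hβ, fun r hr => ⟨x, α, hα, hF, hM, himp r hr⟩⟩

lemma isOpen_sepP (F G : Set NPoint) : IsOpen (sepP F G) := by
  apply isOpen_of_basic
  rintro w ⟨p, r, hr, hF, hp2, hM, hw⟩
  obtain ⟨β, hβ, himp⟩ := shrink p (by linarith : (0:ℝ) < r/2) w
    (by rw [mem_NK_pos (ne_of_gt hp2)]; exact hw)
  refine ⟨β, hβ, fun z hz => ⟨p, r, hr, hF, hp2, hM, ?_⟩⟩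
  have hz' := himp z hz
  rwa [mem_NK_pos (ne_of_gt hp2)] at hz'

lemma subset_sep {F G : Set NPoint} (hGc : IsClosed G) (hd : Disjoint F G) :
    F ⊆ sep F G := by
  intro p hp
  have hpG : p ∈ Gᶜ := fun h => Set.disjoint_left.1 hd hp h
  obtain ⟨α, hα, hsub⟩ := basic_sub hGc.isOpen_compl p hpG
  by_cases h2 : p.val.2 = 0
  · left
    refine ⟨p.val.1, α, hα, ?_, ?_, ?_⟩
    · have hax : axpt p.val.1 = p := Subtype.ext (val_axis h2).symm
      rwa [hax]
    · intro q hq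
      have hmem : q ∈ (Subtype.val ⁻¹' NK p.val α : Set NPoint) := by
        rw [Set.mem_preimage, val_axis h2]
        exact inSq_mem_NK hq
      exact hsub hmem
    · rw [val_axis h2]
      have : p.val ∈ NK p.val (α/4) := mem_NK_self (by linarith)
      rwa [val_axis h2] at this
  · right
    refine ⟨p, α, hα, hp, lt_of_le_of_ne p.2 (Ne.symm h2), fun q hdq => ?_, ?_⟩
    · exact hsub (by rw [Set.mem_preimage, mem_NK_pos h2]; exact hdq)
    · simpa [dist_self] using (by linarith : (0:ℝ) < α/2)

lemma no_ax_P {F G : Set NPoint} {x α : ℝ} (hα : 0 < α) (hxF : axpt x ∈ F)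
    (Mx : ∀ q : NPoint, inSq x α q → q ∉ G) {p : NPoint} {s : ℝ} (hs : 0 < s)
    (hpG : p ∈ G) (hppos : 0 < p.val.2)
    (Hp : ∀ q : NPoint, dist q.val p.val < s → q ∉ F)
    {w : NPoint} (hw1 : w.val ∈ NK (x,0) (α/4)) (hw2 : dist w.val p.val < s/2) : False := by
  have hwx : dist w.val ((x:ℝ),0) ≤ α/2 := by
    rcases mem_NK_axis.1 hw1 with e1 | S1
    · rw [e1, axpt_val, dist_self]
      linarith
    · apply le_of_lt
      rw [Prod.dist_eq]
      apply max_lt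
      · rw [Real.dist_eq]
        have := S1.1
        linarith
      · rw [Real.dist_eq, sub_zero, abs_of_pos S1.2.1]
        have := S1.2.2
        linarith
  rcases le_total α s with hcase | hcase
  · apply Hp (axpt x) ?_ hxF
    calc dist (axpt x).val p.val ≤ dist (axpt x).val w.val + dist w.val p.val :=
          dist_triangle _ _ _
      _ = dist w.val ((x:ℝ),0) + dist w.val p.val := by rw [dist_comm, axpt_val]
      _ < α/2 + s/2 := by linarith
      _ ≤ s := by linarith
  · apply Mx p ?_ hpG
    have f1 : |p.val.1 - w.val.1| ≤ dist p.val w.val := fst_abs_le _ _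
    have f2 : |p.val.2 - w.val.2| ≤ dist p.val w.val := snd_abs_le _ _
    have hdq : dist p.val w.val < s/2 := by rw [dist_comm]; exact hw2
    have g1 : |w.val.1 - x| ≤ dist w.val ((x:ℝ),0) := by
      have := fst_abs_le w.val ((x:ℝ),0); simpa using this
    have g2 : w.val.2 ≤ dist w.val ((x:ℝ),0) := by
      have := snd_abs_le w.val ((x:ℝ),0)
      rw [sub_zero] at this
      exact (le_abs_self _).trans this
    refine ⟨?_, hppos, ?_⟩
    · have htri : |p.val.1 - x| ≤ |p.val.1 - w.val.1| + |w.val.1 - x| := abs_sub_le _ _ _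
      linarith
    · have hp2w : p.val.2 - w.val.2 ≤ |p.val.2 - w.val.2| := le_abs_self _
      linarith

lemma sep_inter_empty {F G : Set NPoint} (hF : F = closure (interior F))
    (hG : G = closure (interior G)) :
    ∀ w : NPoint, w ∈ sep F G → w ∈ sep G F → False := by
  rintro w (⟨x, α, hα, hxF, Mx, hw1⟩ | ⟨p, r, hr, hpF, hppos, Hp, hw1⟩)
    (⟨y, γ, hγ, hyG, My, hw2⟩ | ⟨q, s, hs, hqG, hqpos, Hq, hw2⟩)
  · -- axis vs axis
    have d1 : α ≤ |y - x| := dist_lower hG Mx hyG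
    have d2 : γ ≤ |x - y| := dist_lower hF My hxF
    rcases mem_NK_axis.1 hw1 with e1 | S1
    · rcases mem_NK_axis.1 hw2 with e2 | S2
      · have hxy : x = y := by
          have h12 := congrArg (fun u : NPoint => u.val.1) (e1.symm.trans e2)
          simpa using h12
        rw [hxy, sub_self, abs_zero] at d1
        linarith
      · rw [e1] at S2
        exact absurd S2.2.1 (by simp [axpt])
    · rcases mem_NK_axis.1 hw2 with e2 | S2
      · rw [e2] at S1
        exact absurd S1.2.1 (by simp [axpt])
      · have h1 := S1.1
        have h2 := S2.1
        have tri : |x - y| ≤ |x - w.val.1| + |w.val.1 - y| := abs_sub_le _ _ _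
        have c1 : |x - w.val.1| = |w.val.1 - x| := abs_sub_comm _ _
        have c2 : |y - x| = |x - y| := abs_sub_comm _ _
        linarith
  · -- axis (F side) vs interior (G side)
    exact no_ax_P hα hxF Mx hs hqG hqpos Hq hw1 hw2
  · -- interior (F side) vs axis (G side)
    exact no_ax_P hγ hyG My hr hpF hppos Hp hw2 hw1
  · -- interior vs interior
    rcases le_total r s with h | h
    · refine Hq p ?_ hpF
      calc dist p.val q.val ≤ dist p.val w.val + dist w.val q.val := dist_triangle _ _ _
        _ = dist w.val p.val + dist w.val q.val := by rw [dist_comm]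
        _ < r/2 + s/2 := by linarith
        _ ≤ s := by linarith
    · refine Hp q ?_ hqG
      calc dist q.val p.val ≤ dist q.val w.val + dist w.val p.val := dist_triangle _ _ _
        _ = dist w.val q.val + dist w.val p.val := by rw [dist_comm]
        _ < s/2 + r/2 := by linarith
        _ ≤ r := by linarith

lemma rc_sep {F G : Set NPoint} (hF : F = closure (interior F))
    (hG : G = closure (interior G)) (hd : Disjoint F G) :
    ∃ U V : Set NPoint, IsOpen U ∧ IsOpen V ∧ F ⊆ U ∧ G ⊆ V ∧ Disjoint U V := by
  have hGc : IsClosed G := by rw [hG]; exact isClosed_closure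
  have hFc : IsClosed F := by rw [hF]; exact isClosed_closure
  refine ⟨sep F G, sep G F, (isOpen_sepAx F G).union (isOpen_sepP F G),
    (isOpen_sepAx G F).union (isOpen_sepP G F),
    subset_sep hGc hd, subset_sep hFc hd.symm, ?_⟩
  rw [Set.disjoint_left]
  intro w hw hw'
  exact sep_inter_empty hF hG w hw hw'

lemma not_normal : ¬ NormalSpace NPoint := by
  intro hN
  have hCirr : IsClosed {p : NPoint | p.val.2 = 0 ∧ p.val.1 ∈ {x : ℝ | Irrational x}} :=
    axis_closed _
  have hCrat : IsClosed {p : NPoint | p.val.2 = 0 ∧ p.val.1 ∈ {x : ℝ | ¬ Irrational x}} :=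
    axis_closed _
  have hdisj : Disjoint {p : NPoint | p.val.2 = 0 ∧ p.val.1 ∈ {x : ℝ | Irrational x}}
      {p : NPoint | p.val.2 = 0 ∧ p.val.1 ∈ {x : ℝ | ¬ Irrational x}} := by
    rw [Set.disjoint_left]
    rintro p ⟨-, h1⟩ ⟨-, h2⟩
    exact h2 h1
  obtain ⟨U, V, hU, hV, hIU, hRV, hUV⟩ := hN.normal _ _ hCirr hCrat hdisj
  have Hf' : ∀ x : ℝ, ∃ α : ℝ, Irrational x →
      (0 < α ∧ (Subtype.val ⁻¹' NK ((x:ℝ), 0) α : Set NPoint) ⊆ U) := by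
    intro x
    by_cases h : Irrational x
    · obtain ⟨α, hα, hs⟩ := basic_sub hU (axpt x) (hIU ⟨rfl, h⟩)
      exact ⟨α, fun _ => ⟨hα, hs⟩⟩
    · exact ⟨1, fun h' => absurd h' h⟩
  choose f hf using Hf'
  set A : ℕ → Set ℝ := fun n => {x | Irrational x ∧ 1/((n:ℝ)+1) < f x} with hA
  have hcov : (⋃ i : ℕ ⊕ ℚ, Sum.elim (fun n => closure (A n)) (fun q : ℚ => ({(q : ℝ)} : Set ℝ)) i)
      = Set.univ := by
    rw [Set.eq_univ_iff_forall]
    intro x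
    by_cases hx : Irrational x
    · obtain ⟨n, hn⟩ := exists_nat_one_div_lt (hf x hx).1
      exact Set.mem_iUnion.2 ⟨Sum.inl n, subset_closure ⟨hx, hn⟩⟩
    · have hx' : x ∈ Set.range ((↑) : ℚ → ℝ) := not_not.1 hx
      obtain ⟨q, hq⟩ := hx'
      exact Set.mem_iUnion.2 ⟨Sum.inr q, by simp [hq.symm]⟩
  obtain ⟨i, z, hz⟩ := nonempty_interior_of_iUnion_of_closed
    (fun i => by cases i with
      | inl n => exact isClosed_closure
      | inr q => exact isClosed_singleton) hcov
  cases i with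
  | inr q =>
    simp only [Sum.elim_inr] at hz
    have hzq : z = (q:ℝ) := Set.mem_singleton_iff.1 (interior_subset hz)
    rw [mem_interior_iff_mem_nhds, Metric.mem_nhds_iff] at hz
    obtain ⟨ε, hε, hb⟩ := hz
    have hmem : (q:ℝ) + ε/2 ∈ Metric.ball z ε := by
      rw [Metric.mem_ball, Real.dist_eq, hzq]
      rw [show (q:ℝ) + ε/2 - (q:ℝ) = ε/2 by ring, abs_of_pos (by linarith)]
      linarith
    have hcontra := hb hmem
    rw [Set.mem_singleton_iff] at hcontra
    have : ε/2 = 0 := by linarith [hcontra]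
    linarith
  | inl n =>
    simp only [Sum.elim_inl] at hz
    rw [mem_interior_iff_mem_nhds, Metric.mem_nhds_iff] at hz
    obtain ⟨ε, hε, hb⟩ := hz
    obtain ⟨b, hbz⟩ := exists_rat_near z (half_pos hε)
    have hbA : (b:ℝ) ∈ closure (A n) := by
      apply hb
      rw [Metric.mem_ball, Real.dist_eq, abs_sub_comm]
      linarith [hbz]
    obtain ⟨β, hβ, hVs⟩ := basic_sub hV (axpt (b:ℝ)) (hRV ⟨rfl, Rat.not_irrational b⟩)
    have hρ0 : (0:ℝ) < 1/((n:ℝ)+1) := by positivity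
    obtain ⟨a, haA, hab⟩ := Metric.mem_closure_iff.1 hbA (min β (1/((n:ℝ)+1)))
      (lt_min hβ hρ0)
    have haI : Irrational a := haA.1
    have haf : 1/((n:ℝ)+1) < f a := haA.2
    have hf0 : 0 < f a := (hf a haI).1
    have ht : (0:ℝ) < min (1/((n:ℝ)+1)) β := lt_min hρ0 hβ
    set w : NPoint := ⟨((b:ℝ), min (1/((n:ℝ)+1)) β), le_of_lt ht⟩ with hw
    have hwU : w ∈ U := by
      apply (hf a haI).2
      show w.val ∈ NK ((a:ℝ), 0) (f a)
      apply inSq_mem_NK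
      refine ⟨?_, ht, ?_⟩
      · have hba : |(b:ℝ) - a| < 1/((n:ℝ)+1) := by
          have := lt_of_lt_of_le hab (min_le_right _ _)
          rwa [Real.dist_eq] at this
        show |(b:ℝ) - a| < f a
        linarith
      · show min (1/((n:ℝ)+1)) β < 2 * f a
        calc min (1/((n:ℝ)+1)) β ≤ 1/((n:ℝ)+1) := min_le_left _ _
          _ < f a := haf
          _ < 2 * f a := by linarith
    have hwV : w ∈ V := by
      apply hVs
      show w.val ∈ NK ((b:ℝ), 0) β
      apply inSq_mem_NK
      refine ⟨by show |(b:ℝ) - (b:ℝ)| < β; simpa using hβ, ht, ?_⟩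
      show min (1/((n:ℝ)+1)) β < 2 * β
      calc min (1/((n:ℝ)+1)) β ≤ β := min_le_right _ _
        _ < 2 * β := by linarith
    exact Set.disjoint_left.1 hUV hwU hwV

end NiemAux

/-- The Niemytzki plane is not normal, but it is an rc-space. -/
theorem niemytzki_not_normal_but_rc :
    ¬ @NormalSpace NPoint niem ∧
    (∀ F G : Set NPoint,
      F = @closure NPoint niem (@interior NPoint niem F) →
      G = @closure NPoint niem (@interior NPoint niem G) →
      Disjoint F G →
      ∃ U V : Set NPoint, @IsOpen NPoint niem U ∧ @IsOpen NPoint niem V ∧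
        F ⊆ U ∧ G ⊆ V ∧ Disjoint U V) := by
  constructor
  · exact NiemAux.not_normal
  · intro F G hF hG hd
    exact NiemAux.rc_sep hF hG hd
end

section
/- The Sorgenfrey plane is an rc-space: any two disjoint regular closed subsets of ℝ² with the Sorgenfrey product topology have disjoint open neighbourhoods. -/
open Set

/-- The Sorgenfrey (lower limit) topology on the real line. -/
def sorgLine : TopologicalSpace ℝ :=
  TopologicalSpace.generateFrom {s : Set ℝ | ∃ a b : ℝ, s = Set.Ico a b}

/-- The Sorgenfrey plane: the product of two Sorgenfrey lines. -/
def sorgPlane : TopologicalSpace (ℝ × ℝ) :=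
  @instTopologicalSpaceProd ℝ ℝ sorgLine sorgLine

/-- The basic half-open box of side `1/n` with lower-left corner `x`. -/
noncomputable def SBox (x : ℝ × ℝ) (n : ℕ) : Set (ℝ × ℝ) :=
  Set.Ico x.1 (x.1 + 1 / n) ×ˢ Set.Ico x.2 (x.2 + 1 / n)

/-- Half-open box with lower-left corner `z` and side `ε`. -/
def rcBox (z : ℝ × ℝ) (ε : ℝ) : Set (ℝ × ℝ) :=
  Set.Ico z.1 (z.1 + ε) ×ˢ Set.Ico z.2 (z.2 + ε)

lemma rcBox_mono (z : ℝ × ℝ) {a b : ℝ} (h : a ≤ b) : rcBox z a ⊆ rcBox z b :=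
  Set.prod_mono (Set.Ico_subset_Ico_right (by linarith))
    (Set.Ico_subset_Ico_right (by linarith))

lemma mem_rcBox_self (z : ℝ × ℝ) {ε : ℝ} (hε : 0 < ε) : z ∈ rcBox z ε :=
  ⟨⟨le_refl _, by linarith⟩, ⟨le_refl _, by linarith⟩⟩

lemma sorgLine_isOpen_Ico (a b : ℝ) : @IsOpen ℝ sorgLine (Set.Ico a b) :=
  TopologicalSpace.GenerateOpen.basic _ ⟨a, b, rfl⟩

lemma sorgLine_basis {s : Set ℝ} (hs : @IsOpen ℝ sorgLine s) :
    ∀ x ∈ s, ∃ ε > (0:ℝ), Set.Ico x (x + ε) ⊆ s := by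
  have hs' : TopologicalSpace.GenerateOpen {s : Set ℝ | ∃ a b : ℝ, s = Set.Ico a b} s := hs
  clear hs
  induction hs' with
  | basic t ht =>
      obtain ⟨a, b, rfl⟩ := ht
      intro x hx
      refine ⟨b - x, by linarith [hx.2], ?_⟩
      rintro y ⟨hy1, hy2⟩
      exact ⟨le_trans hx.1 hy1, by linarith⟩
  | univ => exact fun x _ => ⟨1, one_pos, fun y _ => trivial⟩
  | inter u t _ _ ihs iht =>
      intro x hx
      obtain ⟨ε1, hε1, h1⟩ := ihs x hx.1
      obtain ⟨ε2, hε2, h2⟩ := iht x hx.2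
      refine ⟨min ε1 ε2, lt_min hε1 hε2, fun y hy => ?_⟩
      constructor
      · exact h1 ⟨hy.1, lt_of_lt_of_le hy.2 (by simp [min_le_left])⟩
      · exact h2 ⟨hy.1, lt_of_lt_of_le hy.2 (by simp [min_le_right])⟩
  | sUnion S _ ih =>
      rintro x ⟨t, htS, hxt⟩
      obtain ⟨ε, hε, h⟩ := ih t htS x hxt
      exact ⟨ε, hε, h.trans (Set.subset_sUnion_of_mem htS)⟩

lemma sorgPlane_isOpen_rcBox (z : ℝ × ℝ) (ε : ℝ) : @IsOpen (ℝ × ℝ) sorgPlane (rcBox z ε) :=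
  @IsOpen.prod ℝ ℝ sorgLine sorgLine _ _ (sorgLine_isOpen_Ico _ _) (sorgLine_isOpen_Ico _ _)

lemma sorgPlane_basis {s : Set (ℝ × ℝ)} (hs : @IsOpen (ℝ × ℝ) sorgPlane s) :
    ∀ z ∈ s, ∃ ε > (0:ℝ), rcBox z ε ⊆ s := by
  intro z hz
  obtain ⟨u, v, hu, hv, hzu, hzv, huv⟩ :=
    (@isOpen_prod_iff ℝ ℝ sorgLine sorgLine s).mp hs z.1 z.2 (by simpa using hz)
  obtain ⟨ε1, hε1, h1⟩ := sorgLine_basis hu z.1 hzu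
  obtain ⟨ε2, hε2, h2⟩ := sorgLine_basis hv z.2 hzv
  refine ⟨min ε1 ε2, lt_min hε1 hε2, fun w hw => huv ?_⟩
  constructor
  · exact h1 ⟨hw.1.1, lt_of_lt_of_le hw.1.2 (by simp [min_le_left])⟩
  · exact h2 ⟨hw.2.1, lt_of_lt_of_le hw.2.2 (by simp [min_le_right])⟩

/-- The separating open set for the first of two regular closed sets. -/
def rcSep (F G : Set (ℝ × ℝ)) : Set (ℝ × ℝ) :=
  {z | ∃ ε > (0:ℝ), Disjoint G (rcBox z ε) ∧
    ((@interior (ℝ × ℝ) sorgPlane F) ∩ rcBox z ε).Nonempty}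

lemma rcSep_isOpen (F G : Set (ℝ × ℝ)) : @IsOpen (ℝ × ℝ) sorgPlane (rcSep F G) := by
  rw [@isOpen_iff_forall_mem_open (ℝ × ℝ) sorgPlane _]
  rintro z ⟨ε, hε, hGd, w, hwF, hwB⟩
  -- a basic box around w inside (interior F) ∩ rcBox z ε
  have hopen : @IsOpen (ℝ × ℝ) sorgPlane ((@interior (ℝ × ℝ) sorgPlane F) ∩ rcBox z ε) :=
    @IsOpen.inter (ℝ × ℝ) sorgPlane _ _ (@isOpen_interior (ℝ × ℝ) sorgPlane F)
      (sorgPlane_isOpen_rcBox z ε)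
  obtain ⟨η₀, hη₀, hsub₀⟩ := sorgPlane_basis hopen w ⟨hwF, hwB⟩
  have hw1 : z.1 ≤ w.1 ∧ w.1 < z.1 + ε := ⟨hwB.1.1, hwB.1.2⟩
  have hw2 : z.2 ≤ w.2 ∧ w.2 < z.2 + ε := ⟨hwB.2.1, hwB.2.2⟩
  set η : ℝ := min η₀ (min (z.1 + ε - w.1) (z.2 + ε - w.2)) with hηdef
  have hη : 0 < η := by
    apply lt_min hη₀
    apply lt_min <;> [linarith [hw1.2]; linarith [hw2.2]]
  have hηη₀ : η ≤ η₀ := min_le_left _ _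
  have hK1 : w.1 + η ≤ z.1 + ε := by
    have := (min_le_right η₀ _).trans (min_le_left (z.1 + ε - w.1) (z.2 + ε - w.2))
    linarith [this]
  have hK2 : w.2 + η ≤ z.2 + ε := by
    have := (min_le_right η₀ _).trans (min_le_right (z.1 + ε - w.1) (z.2 + ε - w.2))
    linarith [this]
  have hηε : η ≤ ε := by linarith [hw1.1]
  have hsub : rcBox w η ⊆ (@interior (ℝ × ℝ) sorgPlane F) ∩ rcBox z ε :=
    (rcBox_mono w hηη₀).trans hsub₀
  refine ⟨rcBox z (η / 4), ?_, sorgPlane_isOpen_rcBox _ _, mem_rcBox_self z (by linarith)⟩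
  rintro z' ⟨⟨hz'1, hz'1'⟩, ⟨hz'2, hz'2'⟩⟩
  refine ⟨ε - η / 2, by linarith, ?_, ?_⟩
  · refine hGd.mono_right ?_
    exact Set.prod_mono (Set.Ico_subset_Ico hz'1 (by linarith))
      (Set.Ico_subset_Ico hz'2 (by linarith))
  · refine ⟨(max w.1 z'.1, max w.2 z'.2), ?_, ?_⟩
    · apply (hsub ?_).1
      constructor
      · exact ⟨le_max_left _ _, by
          apply max_lt <;> [linarith; linarith [hw1.1]]⟩
      · exact ⟨le_max_left _ _, by
          apply max_lt <;> [linarith; linarith [hw2.1]]⟩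
    · constructor
      · exact ⟨le_max_right _ _, by
          apply max_lt <;> [linarith [hK1, hz'1]; linarith]⟩
      · exact ⟨le_max_right _ _, by
          apply max_lt <;> [linarith [hK2, hz'2]; linarith]⟩

lemma subset_rcSep (F G : Set (ℝ × ℝ))
    (hF : F = @closure (ℝ × ℝ) sorgPlane (@interior (ℝ × ℝ) sorgPlane F))
    (hGc : @IsClosed (ℝ × ℝ) sorgPlane G)
    (hFG : Disjoint F G) : F ⊆ rcSep F G := by
  intro x hx
  have hxG : x ∉ G := Set.disjoint_left.mp hFG hx
  obtain ⟨ε, hε, hsub⟩ := sorgPlane_basis hGc.isOpen_compl x hxG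
  refine ⟨ε, hε, ?_, ?_⟩
  · exact Set.disjoint_left.mpr (fun a ha haB => hsub haB ha)
  · have hx' : x ∈ @closure (ℝ × ℝ) sorgPlane (@interior (ℝ × ℝ) sorgPlane F) := hF ▸ hx
    have := (@mem_closure_iff (ℝ × ℝ) sorgPlane _ _).mp hx' (rcBox x ε)
      (sorgPlane_isOpen_rcBox x ε) (mem_rcBox_self x hε)
    obtain ⟨y, hy1, hy2⟩ := this
    exact ⟨y, hy2, hy1⟩

/-- The Sorgenfrey plane is an rc-space: any two disjoint regular closed subsets
have disjoint open neighbourhoods. -/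
theorem sorgenfrey_plane_rc (F G : Set (ℝ × ℝ))
    (hF : F = @closure (ℝ × ℝ) sorgPlane (@interior (ℝ × ℝ) sorgPlane F))
    (hG : G = @closure (ℝ × ℝ) sorgPlane (@interior (ℝ × ℝ) sorgPlane G))
    (hFG : Disjoint F G) :
    ∃ U V : Set (ℝ × ℝ), @IsOpen (ℝ × ℝ) sorgPlane U ∧ @IsOpen (ℝ × ℝ) sorgPlane V ∧
      F ⊆ U ∧ G ⊆ V ∧ Disjoint U V := by
  have hFc : @IsClosed (ℝ × ℝ) sorgPlane F := by
    rw [hF]; exact @isClosed_closure (ℝ × ℝ) sorgPlane _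
  have hGc : @IsClosed (ℝ × ℝ) sorgPlane G := by
    rw [hG]; exact @isClosed_closure (ℝ × ℝ) sorgPlane _
  refine ⟨rcSep F G, rcSep G F, rcSep_isOpen F G, rcSep_isOpen G F,
    subset_rcSep F G hF hGc hFG, subset_rcSep G F hG hFc hFG.symm, ?_⟩
  rw [Set.disjoint_left]
  rintro z ⟨ε, hε, hGd, p, hpF, hpB⟩ ⟨γ, hγ, hFd, q, hqG, hqB⟩
  rcases le_total ε γ with h | h
  · exact Set.disjoint_left.mp hFd
      (@interior_subset (ℝ × ℝ) sorgPlane F p hpF) (rcBox_mono z h hpB)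
  · exact Set.disjoint_left.mp hGd
      (@interior_subset (ℝ × ℝ) sorgPlane G q hqG) (rcBox_mono z h hqB)
end
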